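/- Let U and V be partition-ultrafilters such that there exist surjections f, g : ω → ω with V = f(U) and U = g(V), and suppose U contains a partition all of whose blocks are infinite. Then there is a permutation h of ω with h(U) = V. -/

import Mathlib

open Set

/-- `X` is a partition of ω: pairwise disjoint non-empty subsets covering ℕ. -/
def IsPartition (X : Set (Set ℕ)) : Prop :=
  (∀ b ∈ X, b.Nonempty) ∧ (∀ b ∈ X, ∀ c ∈ X, b ≠ c → Disjoint b c) ∧ ⋃₀ X = Set.univ

/-- `X ⊑ Y` : `X` is coarser than `Y`, i.e. each block of `X` is a union of blocks of `Y`. -/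
def Coarser (X Y : Set (Set ℕ)) : Prop :=
  ∀ b ∈ X, ∃ S ⊆ Y, b = ⋃₀ S

/-- `n` and `m` lie in the same block of `X`. -/
def SameBlock (X : Set (Set ℕ)) (n m : ℕ) : Prop := ∃ b ∈ X, n ∈ b ∧ m ∈ b

/-- The meet `X ⊓ Y` : the finest partition coarser than both `X` and `Y`,
given by the classes of the equivalence relation generated by the two block relations. -/
def pMeet (X Y : Set (Set ℕ)) : Set (Set ℕ) :=
  {b | ∃ n, b = {m | Relation.EqvGen (fun a c => SameBlock X a c ∨ SameBlock Y a c) n m}}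

/-- The one-block partition `{ω}`. -/
def OneBlock : Set (Set ℕ) := {Set.univ}

/-- A partition-filter: a set of partitions of ω not containing `{ω}`,
closed under meets and upward closed under the coarsening relation. -/
def IsPartitionFilter (F : Set (Set (Set ℕ))) : Prop :=
  (∀ X ∈ F, IsPartition X) ∧ OneBlock ∉ F ∧
  (∀ X ∈ F, ∀ Y ∈ F, pMeet X Y ∈ F) ∧
  (∀ X ∈ F, ∀ Y, IsPartition Y → Coarser X Y → Y ∈ F)

/-- A partition-ultrafilter: a maximal partition-filter. -/
def IsPartitionUltrafilter (U : Set (Set (Set ℕ))) : Prop :=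
  IsPartitionFilter U ∧ ∀ F, IsPartitionFilter F → U ⊆ F → U = F

/-- `f(X)` : the finest partition such that `n, m` in a common block of `X`
implies `f n, f m` in a common block of `f(X)`. -/
def imagePart (f : ℕ → ℕ) (X : Set (Set ℕ)) : Set (Set ℕ) :=
  {c | ∃ k, c = {l | Relation.EqvGen
      (fun a b => ∃ n m, SameBlock X n m ∧ f n = a ∧ f m = b) k l}}

/-- `f⁻¹(X) = {f⁻¹(b) : b ∈ X}`. -/
def preimagePart (f : ℕ → ℕ) (X : Set (Set ℕ)) : Set (Set ℕ) :=
  {c | ∃ b ∈ X, c = f ⁻¹' b}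

/-- `f⁻¹(F) = {f⁻¹(X) : X ∈ F}`. -/
def preimageFam (f : ℕ → ℕ) (F : Set (Set (Set ℕ))) : Set (Set (Set ℕ)) :=
  {Y | ∃ X ∈ F, Y = preimagePart f X}

/-- `f(F) = {Y : ∃ X ∈ F, f(X) ⊑ Y}` (among partitions). -/
def imageFilter (f : ℕ → ℕ) (F : Set (Set (Set ℕ))) : Set (Set (Set ℕ)) :=
  {Y | IsPartition Y ∧ ∃ X ∈ F, Coarser (imagePart f X) Y}

/-- A segment: a partition of `{0, …, n-1}`. -/
def IsSegOf (s : Set (Set ℕ)) (n : ℕ) : Prop :=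
  (∀ b ∈ s, b.Nonempty) ∧ (∀ b ∈ s, ∀ c ∈ s, b ≠ c → Disjoint b c) ∧ ⋃₀ s = {k | k < n}

/-- `s*` : the segment `s` (of domain `n`) together with the new block `{n}`. -/
def segExt (s : Set (Set ℕ)) (n : ℕ) : Set (Set ℕ) := insert {n} s

/-- `s ⊴ X` : each block of `s` (a segment of domain `n`) is the trace of a block of `X`. -/
def InitSeg (s : Set (Set ℕ)) (n : ℕ) (X : Set (Set ℕ)) : Prop :=
  ∀ b ∈ s, ∃ d ∈ X, b = d ∩ {k | k < n}

/-- `s ⊑ X` for a segment `s` of domain `n`: each block of `s` is a union of traces of blocks of `X`. -/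
def SegCoarser (s : Set (Set ℕ)) (n : ℕ) (X : Set (Set ℕ)) : Prop :=
  ∀ b ∈ s, ∃ S ⊆ X, b = (⋃₀ S) ∩ {k | k < n}

/-- The segment-coloring-property of a family `C` of (infinite) partitions. -/
def SegColProp (C : Set (Set (Set ℕ))) : Prop :=
  ∀ (k r : ℕ) (π : Set (Set ℕ) → ℕ → Fin (r + 1)), ∀ Z ∈ C,
    ∃ X ∈ C, Coarser X Z ∧
      ∀ (n : ℕ) (s : Set (Set ℕ)) (ns : ℕ),
        IsSegOf s ns → s.ncard = n + 1 → InitSeg s ns X →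
        ∃ c : Fin (r + 1),
          ∀ (u : Set (Set ℕ)) (nu : ℕ),
            IsSegOf u nu → u.ncard = n + k + 1 →
            InitSeg s ns u → SegCoarser (segExt u nu) (nu + 1) X →
            π u nu = c

/-- A Ramseyan ultrafilter: a partition-ultrafilter consisting of infinite partitions
which has the segment-coloring-property. -/
def RamseyanUltrafilter (U : Set (Set (Set ℕ))) : Prop :=
  IsPartitionUltrafilter U ∧ (∀ X ∈ U, X.Infinite) ∧ SegColProp U

/-- `X ⊓ {n}` : glue together all blocks of `X` meeting `{0, …, n-1}` into one block. -/
def glue (X : Set (Set ℕ)) (n : ℕ) : Set (Set ℕ) :=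
  insert (⋃₀ {d ∈ X | ∃ k < n, k ∈ d}) {d ∈ X | ∀ k < n, k ∉ d}

/-- `X ⊑* Y` iff `(X ⊓ {n}) ⊑ Y` for some `n`. -/
def CoarserStar (X Y : Set (Set ℕ)) : Prop := ∃ n, Coarser (glue X n) Y

/-- Meet of a nonempty list of partitions. -/
def listMeet : List (Set (Set ℕ)) → Set (Set ℕ)
  | [] => OneBlock
  | [X] => X
  | X :: Y :: L => pMeet X (listMeet (Y :: L))

/-- The partition-filter generated by a family `B` of partitions:
all partitions `X` such that some finite meet of members of `B` is `⊑*`-below `X`. -/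
def genFilter (B : Set (Set (Set ℕ))) : Set (Set (Set ℕ)) :=
  {X | IsPartition X ∧
    ∃ L : List (Set (Set ℕ)), L ≠ [] ∧ (∀ Y ∈ L, Y ∈ B) ∧ CoarserStar (listMeet L) X}

/-- `X` diagonalizes the family `{X_s : s a segment}` (given as `Xs s n` for `s` of domain `n`). -/
def Diagonalizes (X : Set (Set ℕ)) (Xs : Set (Set ℕ) → ℕ → Set (Set ℕ)) : Prop :=
  Coarser X (Xs ∅ 0) ∧
  ∀ s n, IsSegOf s n → InitSeg (segExt s n) (n + 1) X →
    Coarser (glue X n) (Xs s n)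

/-- The family `A` is relatively happy. -/
def RelativelyHappy (A : Set (Set (Set ℕ))) : Prop :=
  ∀ Xs : Set (Set ℕ) → ℕ → Set (Set ℕ),
    (∀ s n, IsSegOf s n → Xs s n ∈ A) →
    genFilter {X | ∃ s n, IsSegOf s n ∧ X = Xs s n} ⊆ A →
    ∃ X ∈ A, Diagonalizes X Xs

/-- Blockwise action of a map on a partition: `h(X) = {h(b) : b ∈ X}`. -/
def blockImage (h : ℕ → ℕ) (X : Set (Set ℕ)) : Set (Set ℕ) := {c | ∃ b ∈ X, c = h '' b}

/-- Blockwise action of a map on a family of partitions. -/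
def famImage (h : ℕ → ℕ) (U : Set (Set (Set ℕ))) : Set (Set (Set ℕ)) :=
  {Y | ∃ X ∈ U, Y = blockImage h X}


/-! ### Auxiliary development for Statement 3 -/

namespace Stmt3Aux

open Relation

lemma sameBlock_symm {X : Set (Set ℕ)} {n m : ℕ} (h : SameBlock X n m) : SameBlock X m n := by
  obtain ⟨b, hb, h1, h2⟩ := h; exact ⟨b, hb, h2, h1⟩

lemma block_eq {X : Set (Set ℕ)} (hX : IsPartition X) {b c : Set ℕ}
    (hb : b ∈ X) (hc : c ∈ X) {x : ℕ} (hxb : x ∈ b) (hxc : x ∈ c) : b = c := by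
  by_contra hne
  exact Set.disjoint_left.mp (hX.2.1 b hb c hc hne) hxb hxc

lemma sameBlock_refl {X : Set (Set ℕ)} (hX : IsPartition X) (n : ℕ) :
    SameBlock X n n := by
  have h : n ∈ ⋃₀ X := by rw [hX.2.2]; trivial
  obtain ⟨b, hb, hn⟩ := h
  exact ⟨b, hb, hn, hn⟩

lemma sameBlock_trans {X : Set (Set ℕ)} (hX : IsPartition X) {n m p : ℕ}
    (h1 : SameBlock X n m) (h2 : SameBlock X m p) : SameBlock X n p := by
  obtain ⟨b, hb, hnb, hmb⟩ := h1
  obtain ⟨c, hc, hmc, hpc⟩ := h2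
  have hbc := block_eq hX hb hc hmb hmc
  exact ⟨c, hc, hbc ▸ hnb, hpc⟩

/-- Classes of an equivalence relation. -/
def classesOf (E : ℕ → ℕ → Prop) : Set (Set ℕ) := {b | ∃ n, b = {m | E n m}}

lemma sameBlock_classesOf {E : ℕ → ℕ → Prop} (hE : Equivalence E) {n m : ℕ} :
    SameBlock (classesOf E) n m ↔ E n m := by
  constructor
  · rintro ⟨b, ⟨a, rfl⟩, hn, hm⟩
    exact hE.trans (hE.symm hn) hm
  · intro h
    exact ⟨{m | E n m}, ⟨n, rfl⟩, hE.refl n, h⟩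

lemma isPartition_classesOf {E : ℕ → ℕ → Prop} (hE : Equivalence E) :
    IsPartition (classesOf E) := by
  refine ⟨?_, ?_, ?_⟩
  · rintro b ⟨n, rfl⟩; exact ⟨n, hE.refl n⟩
  · rintro b ⟨n, rfl⟩ c ⟨m, rfl⟩ hne
    rw [Set.disjoint_left]
    rintro x hxn hxm
    apply hne
    ext y
    simp only [Set.mem_setOf_eq]
    constructor
    · intro h; exact hE.trans (hE.trans hxm (hE.symm hxn)) h
    · intro h; exact hE.trans (hE.trans hxn (hE.symm hxm)) h
  · rw [Set.eq_univ_iff_forall]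
    intro x
    exact ⟨_, ⟨x, rfl⟩, hE.refl x⟩

lemma pMeet_def (A B : Set (Set ℕ)) :
    pMeet A B = classesOf (EqvGen fun a c => SameBlock A a c ∨ SameBlock B a c) := rfl

lemma imagePart_def (f : ℕ → ℕ) (X : Set (Set ℕ)) :
    imagePart f X
      = classesOf (EqvGen fun a b => ∃ n m, SameBlock X n m ∧ f n = a ∧ f m = b) := rfl

lemma sameBlock_pMeet {A B : Set (Set ℕ)} {n m : ℕ} :
    SameBlock (pMeet A B) n m
      ↔ EqvGen (fun a c => SameBlock A a c ∨ SameBlock B a c) n m :=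
  sameBlock_classesOf (EqvGen.is_equivalence _)

lemma isPartition_pMeet (A B : Set (Set ℕ)) : IsPartition (pMeet A B) :=
  isPartition_classesOf (EqvGen.is_equivalence _)

lemma sameBlock_imagePart {f : ℕ → ℕ} {X : Set (Set ℕ)} {k l : ℕ} :
    SameBlock (imagePart f X) k l
      ↔ EqvGen (fun a b => ∃ n m, SameBlock X n m ∧ f n = a ∧ f m = b) k l :=
  sameBlock_classesOf (EqvGen.is_equivalence _)

lemma isPartition_imagePart (f : ℕ → ℕ) (X : Set (Set ℕ)) : IsPartition (imagePart f X) :=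
  isPartition_classesOf (EqvGen.is_equivalence _)

lemma sameBlock_oneBlock (n m : ℕ) : SameBlock OneBlock n m :=
  ⟨Set.univ, rfl, trivial, trivial⟩

lemma classesOf_eq_oneBlock {E : ℕ → ℕ → Prop} (hE : Equivalence E)
    (h : ∀ n m, E n m) : classesOf E = OneBlock := by
  ext b
  simp only [OneBlock, Set.mem_singleton_iff]
  constructor
  · rintro ⟨n, rfl⟩
    rw [Set.eq_univ_iff_forall]
    intro m; exact h n m
  · rintro rfl
    refine ⟨0, ?_⟩
    symm; rw [Set.eq_univ_iff_forall]
    intro m; exact h 0 m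

lemma coarser_of_rel {A B : Set (Set ℕ)} (hA : IsPartition A) (hB : IsPartition B)
    (h : ∀ n m, SameBlock B n m → SameBlock A n m) : Coarser A B := by
  intro a ha
  refine ⟨{b ∈ B | b ⊆ a}, fun b hb => hb.1, ?_⟩
  apply Set.Subset.antisymm
  · intro x hx
    have hxu : x ∈ ⋃₀ B := by rw [hB.2.2]; trivial
    obtain ⟨b, hb, hxb⟩ := hxu
    refine Set.subset_sUnion_of_mem ?_ hxb
    refine ⟨hb, fun y hy => ?_⟩
    obtain ⟨a', ha', hxa', hya'⟩ := h x y ⟨b, hb, hxb, hy⟩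
    rwa [block_eq hA ha' ha hxa' hx] at hya'
  · intro x hx
    obtain ⟨b, hb, hxb⟩ := hx
    exact hb.2 hxb

lemma rel_of_coarser {A B : Set (Set ℕ)} (hA : IsPartition A) (hB : IsPartition B)
    (hco : Coarser A B) {n m : ℕ} (h : SameBlock B n m) : SameBlock A n m := by
  obtain ⟨b, hb, hnb, hmb⟩ := h
  have hn : n ∈ ⋃₀ A := by rw [hA.2.2]; trivial
  obtain ⟨a, ha, hna⟩ := hn
  obtain ⟨S, hS, haS⟩ := hco a ha
  have hna' := hna
  rw [haS] at hna'
  obtain ⟨b', hb', hnb'⟩ := hna'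
  have hbb : b' = b := block_eq hB (hS hb') hb hnb' hnb
  refine ⟨a, ha, hna, ?_⟩
  rw [haS]
  exact Set.subset_sUnion_of_mem hb' (by rw [hbb]; exact hmb)

lemma coarser_refl {A : Set (Set ℕ)} (hA : IsPartition A) : Coarser A A :=
  coarser_of_rel hA hA fun _ _ h => h

lemma coarser_trans {A B C : Set (Set ℕ)} (hA : IsPartition A) (hB : IsPartition B)
    (hC : IsPartition C) (h1 : Coarser A B) (h2 : Coarser B C) : Coarser A C :=
  coarser_of_rel hA hC fun n m h =>
    rel_of_coarser hA hB h1 (rel_of_coarser hB hC h2 h)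

lemma coarser_pMeet_left {A B : Set (Set ℕ)} (hA : IsPartition A) :
    Coarser (pMeet A B) A :=
  coarser_of_rel (isPartition_pMeet A B) hA fun n m h =>
    sameBlock_pMeet.2 (EqvGen.rel n m (Or.inl h))

lemma coarser_pMeet_right {A B : Set (Set ℕ)} (hB : IsPartition B) :
    Coarser (pMeet A B) B :=
  coarser_of_rel (isPartition_pMeet A B) hB fun n m h =>
    sameBlock_pMeet.2 (EqvGen.rel n m (Or.inr h))


lemma mem_of_compat {U : Set (Set (Set ℕ))} (hU : IsPartitionUltrafilter U)
    (hne : U.Nonempty) {Z : Set (Set ℕ)} (hZ : IsPartition Z)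
    (hcompat : ∀ X ∈ U, pMeet X Z ≠ OneBlock) : Z ∈ U := by
  classical
  set G : Set (Set (Set ℕ)) :=
    {P | IsPartition P ∧ ∃ X ∈ U, Coarser (pMeet X Z) P} with hGdef
  have hUpart : ∀ X ∈ U, IsPartition X := hU.1.1
  have hGfilter : IsPartitionFilter G := by
    refine ⟨fun P hP => hP.1, ?_, ?_, ?_⟩
    · rintro ⟨hP, X, hXU, hco⟩
      apply hcompat X hXU
      apply classesOf_eq_oneBlock (EqvGen.is_equivalence _)
      intro n m
      have hclass : ({l | EqvGen (fun a c => SameBlock X a c ∨ SameBlock Z a c) n l} : Set ℕ)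
          ∈ pMeet X Z := ⟨n, rfl⟩
      obtain ⟨S, hS, heq⟩ := hco _ hclass
      have hnclass : n ∈ ({l | EqvGen (fun a c => SameBlock X a c ∨ SameBlock Z a c) n l} : Set ℕ) :=
        (EqvGen.is_equivalence _).refl n
      rw [heq] at hnclass
      obtain ⟨s, hsS, hns⟩ := hnclass
      have hsuniv : s = Set.univ := hS hsS
      have hm : m ∈ ⋃₀ S := ⟨s, hsS, by rw [hsuniv]; trivial⟩
      rw [← heq] at hm
      exact hm
    · rintro P₁ ⟨hP₁, X₁, hX₁, hco₁⟩ P₂ ⟨hP₂, X₂, hX₂, hco₂⟩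
      refine ⟨isPartition_pMeet _ _, pMeet X₁ X₂, hU.1.2.2.1 X₁ hX₁ X₂ hX₂, ?_⟩
      apply coarser_of_rel (isPartition_pMeet _ _) (isPartition_pMeet _ _)
      intro n m hnm
      rw [sameBlock_pMeet] at hnm ⊢
      have key : ∀ a b : ℕ,
          EqvGen (fun x y => SameBlock P₁ x y ∨ SameBlock P₂ x y) a b →
          EqvGen (fun x y => SameBlock (pMeet X₁ X₂) x y ∨ SameBlock Z x y) a b := by
        intro a b hab
        induction hab with
        | rel x y hxy =>
          rcases hxy with h | h
          · have h1 : SameBlock (pMeet X₁ Z) x y :=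
              rel_of_coarser (isPartition_pMeet _ _) hP₁ hco₁ h
            rw [sameBlock_pMeet] at h1
            refine Relation.EqvGen.mono ?_ _ _ h1
            rintro a' b' (h' | h')
            · exact Or.inl (sameBlock_pMeet.2 (EqvGen.rel _ _ (Or.inl h')))
            · exact Or.inr h'
          · have h1 : SameBlock (pMeet X₂ Z) x y :=
              rel_of_coarser (isPartition_pMeet _ _) hP₂ hco₂ h
            rw [sameBlock_pMeet] at h1
            refine Relation.EqvGen.mono ?_ _ _ h1
            rintro a' b' (h' | h')
            · exact Or.inl (sameBlock_pMeet.2 (EqvGen.rel _ _ (Or.inr h')))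
            · exact Or.inr h'
        | refl x => exact EqvGen.refl x
        | symm x y _ ih => exact EqvGen.symm _ _ ih
        | trans x y z _ _ ih1 ih2 => exact EqvGen.trans _ _ _ ih1 ih2
      exact key n m hnm
    · rintro P ⟨hP, X, hXU, hco⟩ Q hQ hPQ
      exact ⟨hQ, X, hXU, coarser_trans (isPartition_pMeet _ _) hP hQ hco hPQ⟩
  have hsub : U ⊆ G := fun X hX =>
    ⟨hUpart X hX, X, hX, coarser_pMeet_left (hUpart X hX)⟩
  have hUG := hU.2 G hGfilter hsub
  obtain ⟨X₀, hX₀⟩ := hne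
  rw [hUG]
  exact ⟨hZ, X₀, hX₀, coarser_pMeet_right hZ⟩

lemma isPartition_preimagePart {f : ℕ → ℕ} (hf : Function.Surjective f)
    {Y : Set (Set ℕ)} (hY : IsPartition Y) : IsPartition (preimagePart f Y) := by
  refine ⟨?_, ?_, ?_⟩
  · rintro b ⟨c, hc, rfl⟩
    obtain ⟨p, hp⟩ := hY.1 c hc
    obtain ⟨n, rfl⟩ := hf p
    exact ⟨n, hp⟩
  · rintro b ⟨c, hc, rfl⟩ b' ⟨c', hc', rfl⟩ hne
    have hcc : c ≠ c' := by rintro rfl; exact hne rfl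
    have hd := hY.2.1 c hc c' hc' hcc
    rw [Set.disjoint_left] at hd ⊢
    intro x hx hx'
    exact hd hx hx'
  · rw [Set.eq_univ_iff_forall]
    intro n
    have h : f n ∈ ⋃₀ Y := by rw [hY.2.2]; trivial
    obtain ⟨c, hc, hfc⟩ := h
    exact ⟨f ⁻¹' c, ⟨c, hc, rfl⟩, hfc⟩

lemma sameBlock_preimagePart {f : ℕ → ℕ} {Y : Set (Set ℕ)} {n m : ℕ} :
    SameBlock (preimagePart f Y) n m ↔ SameBlock Y (f n) (f m) := by
  constructor
  · rintro ⟨b, ⟨c, hc, rfl⟩, h1, h2⟩; exact ⟨c, hc, h1, h2⟩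
  · rintro ⟨c, hc, h1, h2⟩; exact ⟨f ⁻¹' c, ⟨c, hc, rfl⟩, h1, h2⟩

lemma eqvGen_map_pre {f : ℕ → ℕ} {X Y : Set (Set ℕ)} {a b : ℕ}
    (h : EqvGen (fun a c => SameBlock X a c ∨ SameBlock (preimagePart f Y) a c) a b) :
    EqvGen (fun a c => SameBlock Y a c ∨ SameBlock (imagePart f X) a c) (f a) (f b) := by
  induction h with
  | rel x y hxy =>
    rcases hxy with h | h
    · exact EqvGen.rel _ _ (Or.inr (sameBlock_imagePart.2 (EqvGen.rel _ _ ⟨x, y, h, rfl, rfl⟩)))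
    · exact EqvGen.rel _ _ (Or.inl (sameBlock_preimagePart.1 h))
  | refl x => exact EqvGen.refl (f x)
  | symm x y _ ih => exact EqvGen.symm _ _ ih
  | trans x y z _ _ ih1 ih2 => exact EqvGen.trans _ _ _ ih1 ih2

lemma preimagePart_mem {U V : Set (Set (Set ℕ))} {f : ℕ → ℕ}
    (hU : IsPartitionUltrafilter U) (hV : IsPartitionUltrafilter V)
    (hf : Function.Surjective f) (hfU : imageFilter f U = V) (hne : U.Nonempty)
    {Y : Set (Set ℕ)} (hY : Y ∈ V) : preimagePart f Y ∈ U := by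
  have hYpart : IsPartition Y := hV.1.1 Y hY
  apply mem_of_compat hU hne (isPartition_preimagePart hf hYpart)
  intro X hXU hcontra
  have htot : ∀ n m : ℕ,
      EqvGen (fun a c => SameBlock X a c ∨ SameBlock (preimagePart f Y) a c) n m := by
    intro n m
    have h1 := sameBlock_oneBlock n m
    rw [← hcontra] at h1
    exact sameBlock_pMeet.1 h1
  have himg : imagePart f X ∈ V := by
    rw [← hfU]
    exact ⟨isPartition_imagePart f X, X, hXU, coarser_refl (isPartition_imagePart f X)⟩
  have hmeet : pMeet Y (imagePart f X) ∈ V := hV.1.2.2.1 Y hY _ himg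
  have hone : pMeet Y (imagePart f X) = OneBlock := by
    apply classesOf_eq_oneBlock (EqvGen.is_equivalence _)
    intro p' q'
    obtain ⟨n, rfl⟩ := hf p'
    obtain ⟨m, rfl⟩ := hf q'
    exact eqvGen_map_pre (htot n m)
  rw [hone] at hmeet
  exact hV.1.2.1 hmeet

lemma preimagePart_blocks_infinite {f : ℕ → ℕ} (hf : Function.Surjective f)
    {Y : Set (Set ℕ)} (hbl : ∀ c ∈ Y, c.Infinite) :
    ∀ b ∈ preimagePart f Y, b.Infinite := by
  rintro b ⟨c, hc, rfl⟩
  apply Set.Infinite.of_image f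
  rw [Set.image_preimage_eq c hf]
  exact hbl c hc



lemma isPartition_blockImage (e : ℕ ≃ ℕ) {X : Set (Set ℕ)} (hX : IsPartition X) :
    IsPartition (blockImage (⇑e) X) := by
  refine ⟨?_, ?_, ?_⟩
  · rintro b ⟨c, hc, rfl⟩
    exact (hX.1 c hc).image _
  · rintro b ⟨c, hc, rfl⟩ b' ⟨c', hc', rfl⟩ hne
    have hcc : c ≠ c' := by rintro rfl; exact hne rfl
    have hd := hX.2.1 c hc c' hc' hcc
    rw [Set.disjoint_left] at hd ⊢
    rintro x ⟨y, hy, rfl⟩ ⟨y', hy', hyy⟩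
    have : y' = y := e.injective hyy
    exact hd hy (this ▸ hy')
  · rw [Set.eq_univ_iff_forall]
    intro n
    have h : e.symm n ∈ ⋃₀ X := by rw [hX.2.2]; trivial
    obtain ⟨c, hc, hmem⟩ := h
    exact ⟨e '' c, ⟨c, hc, rfl⟩, ⟨e.symm n, hmem, e.apply_symm_apply n⟩⟩

lemma sameBlock_blockImage (e : ℕ ≃ ℕ) {X : Set (Set ℕ)} {n m : ℕ} :
    SameBlock (blockImage (⇑e) X) (e n) (e m) ↔ SameBlock X n m := by
  constructor
  · rintro ⟨b, ⟨c, hc, rfl⟩, h1, h2⟩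
    obtain ⟨y, hy, hyn⟩ := h1
    obtain ⟨y', hy', hym⟩ := h2
    have hn : y = n := e.injective hyn
    have hm : y' = m := e.injective hym
    exact ⟨c, hc, hn ▸ hy, hm ▸ hy'⟩
  · rintro ⟨b, hb, h1, h2⟩
    exact ⟨e '' b, ⟨b, hb, rfl⟩, ⟨n, h1, rfl⟩, ⟨m, h2, rfl⟩⟩

lemma sameBlock_blockImage' (e : ℕ ≃ ℕ) {X : Set (Set ℕ)} {a b : ℕ} :
    SameBlock (blockImage (⇑e) X) a b ↔ SameBlock X (e.symm a) (e.symm b) := by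
  conv_lhs => rw [← e.apply_symm_apply a, ← e.apply_symm_apply b]
  exact sameBlock_blockImage e

lemma eqvGen_blockImage (e : ℕ ≃ ℕ) {A B : Set (Set ℕ)} {n m : ℕ} :
    EqvGen (fun a c => SameBlock A a c ∨ SameBlock B a c) n m ↔
    EqvGen (fun a c => SameBlock (blockImage (⇑e) A) a c ∨ SameBlock (blockImage (⇑e) B) a c)
      (e n) (e m) := by
  constructor
  · intro h
    induction h with
    | rel x y hxy =>
      exact EqvGen.rel _ _ (hxy.imp (sameBlock_blockImage e).2 (sameBlock_blockImage e).2)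
    | refl x => exact EqvGen.refl _
    | symm x y _ ih => exact EqvGen.symm _ _ ih
    | trans x y z _ _ ih1 ih2 => exact EqvGen.trans _ _ _ ih1 ih2
  · intro h
    have key : ∀ a b : ℕ,
        EqvGen (fun a c => SameBlock (blockImage (⇑e) A) a c ∨ SameBlock (blockImage (⇑e) B) a c) a b →
        EqvGen (fun a c => SameBlock A a c ∨ SameBlock B a c) (e.symm a) (e.symm b) := by
      intro a b hab
      induction hab with
      | rel x y hxy =>
        exact EqvGen.rel _ _ (hxy.imp (sameBlock_blockImage' e).1 (sameBlock_blockImage' e).1)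
      | refl x => exact EqvGen.refl _
      | symm x y _ ih => exact EqvGen.symm _ _ ih
      | trans x y z _ _ ih1 ih2 => exact EqvGen.trans _ _ _ ih1 ih2
    have h2 := key _ _ h
    simpa using h2

lemma blockImage_pMeet (e : ℕ ≃ ℕ) (A B : Set (Set ℕ)) :
    blockImage (⇑e) (pMeet A B) = pMeet (blockImage (⇑e) A) (blockImage (⇑e) B) := by
  ext c
  constructor
  · rintro ⟨b, ⟨n, rfl⟩, rfl⟩
    refine ⟨e n, ?_⟩
    ext x
    simp only [Set.mem_image, Set.mem_setOf_eq]
    constructor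
    · rintro ⟨m, hm, rfl⟩
      exact (eqvGen_blockImage e).1 hm
    · intro hx
      refine ⟨e.symm x, ?_, e.apply_symm_apply x⟩
      apply (eqvGen_blockImage e (n := n) (m := e.symm x)).2
      rwa [e.apply_symm_apply]
  · rintro ⟨p, rfl⟩
    refine ⟨{l | EqvGen (fun a c => SameBlock A a c ∨ SameBlock B a c) (e.symm p) l},
      ⟨e.symm p, rfl⟩, ?_⟩
    ext x
    simp only [Set.mem_image, Set.mem_setOf_eq]
    constructor
    · intro hx
      refine ⟨e.symm x, ?_, e.apply_symm_apply x⟩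
      rw [← e.apply_symm_apply p, ← e.apply_symm_apply x] at hx
      exact (eqvGen_blockImage e).2 hx
    · rintro ⟨m, hm, rfl⟩
      have h2 := (eqvGen_blockImage e).1 hm
      rwa [e.apply_symm_apply] at h2

lemma blockImage_symm_blockImage (e : ℕ ≃ ℕ) (X : Set (Set ℕ)) :
    blockImage (⇑e.symm) (blockImage (⇑e) X) = X := by
  ext b
  constructor
  · rintro ⟨c, ⟨d, hd, rfl⟩, rfl⟩
    have : e.symm '' (e '' d) = d := by
      rw [Set.image_image]; simp
    rwa [this]
  · intro hb
    refine ⟨e '' b, ⟨b, hb, rfl⟩, ?_⟩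
    rw [Set.image_image]; simp

lemma famImage_symm_famImage (e : ℕ ≃ ℕ) (F : Set (Set (Set ℕ))) :
    famImage (⇑e.symm) (famImage (⇑e) F) = F := by
  ext X
  constructor
  · rintro ⟨Y, ⟨Z, hZ, rfl⟩, rfl⟩
    rwa [blockImage_symm_blockImage]
  · intro hX
    exact ⟨blockImage (⇑e) X, ⟨X, hX, rfl⟩, (blockImage_symm_blockImage e X).symm⟩

lemma blockImage_symm_oneBlock (e : ℕ ≃ ℕ) :
    blockImage (⇑e.symm) OneBlock = OneBlock := by
  ext b
  simp only [blockImage, OneBlock, Set.mem_setOf_eq, Set.mem_singleton_iff]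
  constructor
  · rintro ⟨c, hc, rfl⟩
    subst hc
    rw [Set.image_univ]
    exact e.symm.surjective.range_eq
  · rintro rfl
    refine ⟨Set.univ, rfl, ?_⟩
    rw [Set.image_univ]
    exact e.symm.surjective.range_eq.symm

lemma isPartitionFilter_famImage (e : ℕ ≃ ℕ) {F : Set (Set (Set ℕ))}
    (hF : IsPartitionFilter F) : IsPartitionFilter (famImage (⇑e) F) := by
  refine ⟨?_, ?_, ?_, ?_⟩
  · rintro Y ⟨X, hX, rfl⟩
    exact isPartition_blockImage e (hF.1 X hX)
  · rintro ⟨X, hX, hXeq⟩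
    apply hF.2.1
    have h1 : X = blockImage (⇑e.symm) OneBlock := by
      rw [hXeq, blockImage_symm_blockImage]
    rw [blockImage_symm_oneBlock] at h1
    rwa [← h1]
  · rintro Y ⟨X, hX, rfl⟩ Y' ⟨X', hX', rfl⟩
    exact ⟨pMeet X X', hF.2.2.1 X hX X' hX', (blockImage_pMeet e X X').symm⟩
  · rintro Y ⟨X, hX, rfl⟩ Q hQ hco
    refine ⟨blockImage (⇑e.symm) Q, ?_, ?_⟩
    · apply hF.2.2.2 X hX (blockImage (⇑e.symm) Q) (isPartition_blockImage e.symm hQ)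
      apply coarser_of_rel (hF.1 X hX) (isPartition_blockImage e.symm hQ)
      intro n m h
      have h2 : SameBlock Q (e n) (e m) := by
        have h3 := (sameBlock_blockImage' e.symm).1 h
        simpa using h3
      have h3 : SameBlock (blockImage (⇑e) X) (e n) (e m) :=
        rel_of_coarser (isPartition_blockImage e (hF.1 X hX)) hQ hco h2
      exact (sameBlock_blockImage e).1 h3
    · have := blockImage_symm_blockImage e.symm Q
      simp only [Equiv.symm_symm] at this
      exact this.symm


lemma exists_perm {Y : Set (Set ℕ)} (hYpart : IsPartition Y)
    (hYinf : ∀ c ∈ Y, c.Infinite) {f : ℕ → ℕ} (hf : Function.Surjective f) :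
    ∃ E : ℕ ≃ ℕ, ∀ n, SameBlock Y (E n) (f n) := by
  classical
  have hcover : ∀ m : ℕ, ∃ c, c ∈ Y ∧ m ∈ c := by
    intro m
    have h : m ∈ ⋃₀ Y := by rw [hYpart.2.2]; trivial
    obtain ⟨c, hc, hm⟩ := h
    exact ⟨c, hc, hm⟩
  choose blk hblkmem hblkself using hcover
  have blk_eq : ∀ {m : ℕ} {c : Set ℕ}, c ∈ Y → m ∈ c → blk m = c := by
    intro m c hc hm
    exact block_eq hYpart (hblkmem m) hc (hblkself m) hm
  let T := {c // c ∈ Y}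
  let q : ℕ → T := fun n => ⟨blk (f n), hblkmem (f n)⟩
  let p : ℕ → T := fun m => ⟨blk m, hblkmem m⟩
  have qfiber : ∀ c : T, {n | q n = c} = f ⁻¹' (c : Set ℕ) := by
    intro c
    ext n
    simp only [Set.mem_setOf_eq, Set.mem_preimage]
    constructor
    · intro h
      have : blk (f n) = (c : Set ℕ) := congrArg Subtype.val h
      rw [← this]
      exact hblkself (f n)
    · intro h
      exact Subtype.ext (blk_eq c.2 h)
  have pfiber : ∀ c : T, {m | p m = c} = (c : Set ℕ) := by
    intro c
    ext m
    simp only [Set.mem_setOf_eq]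
    constructor
    · intro h
      have : blk m = (c : Set ℕ) := congrArg Subtype.val h
      rw [← this]
      exact hblkself m
    · intro h
      exact Subtype.ext (blk_eq c.2 h)
  have heqv : ∀ c : T, Nonempty ({n // q n = c} ≃ {m // p m = c}) := by
    intro c
    have h1 : {n | q n = c}.Infinite := by
      rw [qfiber]
      apply Set.Infinite.of_image f
      rw [Set.image_preimage_eq _ hf]
      exact hYinf _ c.2
    have h2 : {m | p m = c}.Infinite := by
      rw [pfiber]
      exact hYinf _ c.2
    haveI : Infinite {n // q n = c} := h1.to_subtype
    haveI : Infinite {m // p m = c} := h2.to_subtype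
    exact nonempty_equiv_of_countable
  let eqv : ∀ c : T, {n // q n = c} ≃ {m // p m = c} := fun c => Classical.choice (heqv c)
  refine ⟨(Equiv.sigmaFiberEquiv q).symm.trans
    ((Equiv.sigmaCongrRight eqv).trans (Equiv.sigmaFiberEquiv p)), ?_⟩
  intro n
  show SameBlock Y (((eqv (q n)) ⟨n, rfl⟩ : {m // p m = q n}) : ℕ) (f n)
  have hpq : p (((eqv (q n)) ⟨n, rfl⟩ : {m // p m = q n}) : ℕ) = q n :=
    ((eqv (q n)) ⟨n, rfl⟩).2
  have hblk : blk (((eqv (q n)) ⟨n, rfl⟩ : {m // p m = q n}) : ℕ) = blk (f n) :=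
    congrArg Subtype.val hpq
  exact ⟨blk (f n), hblkmem (f n), by rw [← hblk]; exact hblkself _, hblkself (f n)⟩

end Stmt3Aux

/-- equivalent partition-ultrafilters, one of which contains a partition
with all blocks infinite, are isomorphic via a permutation of ω. -/
theorem stmt3 (U V : Set (Set (Set ℕ))) (f g : ℕ → ℕ)
    (hU : IsPartitionUltrafilter U) (hV : IsPartitionUltrafilter V)
    (hf : Function.Surjective f) (hg : Function.Surjective g)
    (hfU : imageFilter f U = V) (hgV : imageFilter g V = U)
    (hX : ∃ X ∈ U, ∀ b ∈ X, b.Infinite) :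
    ∃ h : ℕ → ℕ, Function.Bijective h ∧ famImage h U = V := by
  classical
  obtain ⟨Xs, hXsU, hXsInf⟩ := hX
  have hneU : U.Nonempty := ⟨Xs, hXsU⟩
  have hneV : V.Nonempty := by
    refine ⟨imagePart f Xs, ?_⟩
    rw [← hfU]
    exact ⟨Stmt3Aux.isPartition_imagePart f Xs, Xs, hXsU,
      Stmt3Aux.coarser_refl (Stmt3Aux.isPartition_imagePart f Xs)⟩
  -- Y* = g⁻¹(X*) ∈ V has all blocks infinite
  have hYstar : preimagePart g Xs ∈ V :=
    Stmt3Aux.preimagePart_mem hV hU hg hgV hneV hXsU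
  set Ystar := preimagePart g Xs with hYstardef
  have hYstarPart : IsPartition Ystar := hV.1.1 _ hYstar
  have hYstarInf : ∀ c ∈ Ystar, c.Infinite :=
    Stmt3Aux.preimagePart_blocks_infinite hg hXsInf
  -- X₀ = f⁻¹(Y*) ∈ U
  set X₀ := preimagePart f Ystar with hX₀def
  have hX₀U : X₀ ∈ U := Stmt3Aux.preimagePart_mem hU hV hf hfU hneU hYstar
  -- permutation matching blocks of X₀ with blocks of Y*
  obtain ⟨E, hE⟩ := Stmt3Aux.exists_perm hYstarPart hYstarInf hf
  -- main inclusion : famImage E U ⊆ V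
  have hmain : ∀ X ∈ U, blockImage (⇑E) X ∈ V := by
    intro X hXU
    have hXpart : IsPartition X := hU.1.1 X hXU
    have hX' : pMeet X X₀ ∈ U := hU.1.2.2.1 X hXU X₀ hX₀U
    have himg : imagePart f (pMeet X X₀) ∈ V := by
      rw [← hfU]
      exact ⟨Stmt3Aux.isPartition_imagePart _ _, _, hX',
        Stmt3Aux.coarser_refl (Stmt3Aux.isPartition_imagePart _ _)⟩
    apply hV.1.2.2.2 _ himg _ (Stmt3Aux.isPartition_blockImage E hXpart)
    apply Stmt3Aux.coarser_of_rel (Stmt3Aux.isPartition_imagePart _ _)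
      (Stmt3Aux.isPartition_blockImage E hXpart)
    intro a b hab
    obtain ⟨bb, ⟨c0, hc0, rfl⟩, ha, hb⟩ := hab
    obtain ⟨n, hn, rfl⟩ := ha
    obtain ⟨m, hm, rfl⟩ := hb
    have hXnm : SameBlock X n m := ⟨c0, hc0, hn, hm⟩
    obtain ⟨n', hn'⟩ := hf (E n)
    obtain ⟨m', hm'⟩ := hf (E m)
    have hsb_n : SameBlock X₀ n n' := by
      apply Stmt3Aux.sameBlock_preimagePart.2
      rw [hn']
      exact Stmt3Aux.sameBlock_symm (hE n)
    have hsb_m : SameBlock X₀ m m' := by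
      apply Stmt3Aux.sameBlock_preimagePart.2
      rw [hm']
      exact Stmt3Aux.sameBlock_symm (hE m)
    have hX'nm : SameBlock (pMeet X X₀) n' m' := by
      apply Stmt3Aux.sameBlock_pMeet.2
      exact Relation.EqvGen.trans _ _ _
        (Relation.EqvGen.symm _ _ (Relation.EqvGen.rel _ _ (Or.inr hsb_n)))
        (Relation.EqvGen.trans _ _ _
          (Relation.EqvGen.rel _ _ (Or.inl hXnm))
          (Relation.EqvGen.rel _ _ (Or.inr hsb_m)))
    have hfin : SameBlock (imagePart f (pMeet X X₀)) (f n') (f m') :=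
      Stmt3Aux.sameBlock_imagePart.2 (Relation.EqvGen.rel _ _ ⟨n', m', hX'nm, rfl, rfl⟩)
    rwa [hn', hm'] at hfin
  refine ⟨⇑E, E.bijective, ?_⟩
  have hFsub : famImage (⇑E) U ⊆ V := by
    rintro Y ⟨X, hXU, rfl⟩
    exact hmain X hXU
  -- maximality transport
  have h1 : U ⊆ famImage (⇑E.symm) V := by
    intro X hXU
    exact ⟨blockImage (⇑E) X, hFsub ⟨X, hXU, rfl⟩,
      (Stmt3Aux.blockImage_symm_blockImage E X).symm⟩
  have h2 := hU.2 _ (Stmt3Aux.isPartitionFilter_famImage E.symm hV.1) h1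
  rw [h2]
  have h3 := Stmt3Aux.famImage_symm_famImage E.symm V
  simp only [Equiv.symm_symm] at h3
  exact h3
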